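/- For any m×n real matrix A and symmetric positive definite matrices M (m×m) and N (n×n), there exist an m×m matrix Ũ with Ũᵀ M Ũ = I_m, an n×n matrix Ṽ with Ṽᵀ N Ṽ = I_n, and an m×n matrix Σ with Σ_{ij} = 0 for i ≠ j and Σ_{ii} ≥ 0, such that A = M Ũ Σ Ṽᵀ N (existence of the elliptic singular value decomposition). -/

import Mathlib

open Matrix

private lemma dot_aux {m n : ℕ} (B : Matrix (Fin m) (Fin n) ℝ) (x y : Fin n → ℝ) :
    (B *ᵥ x) ⬝ᵥ (B *ᵥ y) = x ⬝ᵥ ((Bᵀ * B) *ᵥ y) := by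
  rw [dotProduct_mulVec, vecMul_mulVec, ← dotProduct_mulVec]

private lemma inner_euc {k : ℕ} (a b : EuclideanSpace ℝ (Fin k)) :
    (inner ℝ a b : ℝ) = (⇑a) ⬝ᵥ (⇑b) := by
  simp [PiLp.inner_apply, RCLike.inner_apply, dotProduct, mul_comm]

private lemma svd_exists {m n : ℕ} (B : Matrix (Fin m) (Fin n) ℝ) :
    ∃ (U : Matrix (Fin m) (Fin m) ℝ) (V : Matrix (Fin n) (Fin n) ℝ)
      (Sig : Matrix (Fin m) (Fin n) ℝ),
      Uᵀ * U = 1 ∧ Vᵀ * V = 1 ∧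
      (∀ (i : Fin m) (j : Fin n), (i : ℕ) ≠ (j : ℕ) → Sig i j = 0) ∧
      (∀ (i : Fin m) (j : Fin n), (i : ℕ) = (j : ℕ) → 0 ≤ Sig i j) ∧
      B = U * Sig * Vᵀ := by
  classical
  have hG : (Bᵀ * B).PosSemidef := by
    simpa [conjTranspose_eq_transpose_of_trivial] using posSemidef_conjTranspose_mul_self B
  set G := Bᵀ * B with hGdef
  have hH : G.IsHermitian := hG.1
  set μ : Fin n → ℝ := hH.eigenvalues with hμdef
  have hμ0 : ∀ j, 0 ≤ μ j := fun j => hG.eigenvalues_nonneg j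
  set w : OrthonormalBasis (Fin n) ℝ (EuclideanSpace ℝ (Fin n)) := hH.eigenvectorBasis with hwdef
  have hwdot : ∀ j k, (⇑(w j)) ⬝ᵥ (⇑(w k)) = if j = k then (1:ℝ) else 0 := by
    intro j k
    have := orthonormal_iff_ite.mp w.orthonormal j k
    rw [inner_euc] at this
    simpa using this
  have hkey : ∀ j k, (B *ᵥ ⇑(w j)) ⬝ᵥ (B *ᵥ ⇑(w k)) = if j = k then μ j else 0 := by
    intro j k
    rw [dot_aux, hH.mulVec_eigenvectorBasis]
    simp only [dotProduct_smul, smul_eq_mul, hwdot]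
    by_cases h : j = k <;> simp [h, ← hwdef, ← hμdef, hwdot]
  -- the candidate left singular vectors
  set y : Fin n → EuclideanSpace ℝ (Fin m) :=
    fun j => (Real.sqrt (μ j))⁻¹ • (WithLp.equiv 2 (Fin m → ℝ)).symm (B *ᵥ ⇑(w j)) with hydef
  have hyinner : ∀ j k, (inner ℝ (y j) (y k) : ℝ) =
      (Real.sqrt (μ j))⁻¹ * (Real.sqrt (μ k))⁻¹ * (if j = k then μ j else 0) := by
    intro j k
    rw [hydef]
    simp only [real_inner_smul_left, real_inner_smul_right, inner_euc,
      Equiv.apply_symm_apply, WithLp.equiv_symm_apply, WithLp.ofLp_toLp]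
    rw [hkey]
    ring
  have hynorm : ∀ j, μ j ≠ 0 → (inner ℝ (y j) (y j) : ℝ) = 1 := by
    intro j hj
    rw [hyinner]
    simp only [if_pos rfl]
    have h0 : 0 < μ j := lt_of_le_of_ne (hμ0 j) (Ne.symm hj)
    rw [← Real.sqrt_mul_self h0.le]
    field_simp
    simp [Real.sq_sqrt, Real.sqrt_nonneg]
  -- orthonormality of the nonzero-eigenvalue family
  have hyorth : ∀ (s : Set (Fin n)), (∀ j ∈ s, μ j ≠ 0) →
      ∀ (f : {x // x ∈ s} → Fin n), (∀ x, f x = x.1) → Orthonormal ℝ (fun x => y (f x)) := by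
    intro s hs f hf
    rw [orthonormal_iff_ite]
    intro a b
    rw [hyinner]
    by_cases hab : a = b
    · subst hab
      have hμa : μ (f a) ≠ 0 := by rw [hf]; exact hs a.1 a.2
      have h0 : 0 < μ (f a) := lt_of_le_of_ne (hμ0 _) (Ne.symm hμa)
      rw [if_pos rfl, if_pos rfl, ← Real.sqrt_mul_self h0.le]
      field_simp
      simp [Real.sq_sqrt, Real.sqrt_nonneg]
    · have : f a ≠ f b := by
        rw [hf, hf]; exact fun h => hab (Subtype.ext h)
      rw [if_neg this, if_neg hab, mul_zero]
  -- the number of nonzero eigenvalues is at most m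
  set r : ℕ := Fintype.card {j : Fin n // μ j ≠ 0} with hrdef
  have hrm : r ≤ m := by
    have ho : Orthonormal ℝ (fun x : {j : Fin n // μ j ≠ 0} => y x.1) :=
      hyorth {j | μ j ≠ 0} (fun j hj => hj) (fun x => x.1) (fun x => rfl)
    have := ho.linearIndependent.fintype_card_le_finrank
    rwa [finrank_euclideanSpace, Fintype.card_fin] at this
  have hrn : r ≤ n := by
    have := Fintype.card_subtype_le (fun j : Fin n => μ j ≠ 0)
    rwa [Fintype.card_fin] at this
  -- permutation putting nonzero eigenvalues first
  have eFin : {j : Fin n // (j : ℕ) < r} ≃ Fin r :=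
    { toFun := fun j => ⟨j.1.1, j.2⟩
      invFun := fun k => ⟨⟨k.1, lt_of_lt_of_le k.2 hrn⟩, k.2⟩
      left_inv := fun j => by ext; rfl
      right_inv := fun k => rfl }
  have e : {j : Fin n // (j : ℕ) < r} ≃ {j : Fin n // μ j ≠ 0} :=
    eFin.trans (Fintype.equivFinOfCardEq hrdef.symm).symm
  set π : Equiv.Perm (Fin n) := e.extendSubtype with hπdef
  have hπ1 : ∀ j : Fin n, (j : ℕ) < r → μ (π j) ≠ 0 := fun j hj =>
    e.extendSubtype_mem j hj
  have hπ2 : ∀ j : Fin n, ¬ (j : ℕ) < r → μ (π j) = 0 := fun j hj => by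
    have := e.extendSubtype_not_mem j hj
    simpa using this
  -- extend to an orthonormal basis of ℝ^m
  set s : Set (Fin m) := {i | ∃ h : (i : ℕ) < n, μ (π ⟨(i : ℕ), h⟩) ≠ 0} with hsdef
  set v0 : Fin m → EuclideanSpace ℝ (Fin m) :=
    fun i => if h : (i : ℕ) < n then y (π ⟨(i : ℕ), h⟩) else 0 with hv0def
  have hv0orth : Orthonormal ℝ (s.restrict v0) := by
    have key : ∀ x : {i // i ∈ s}, ∃ h : ((x : Fin m) : ℕ) < n,
        v0 x.1 = y (π ⟨(x.1 : ℕ), h⟩) ∧ μ (π ⟨(x.1 : ℕ), h⟩) ≠ 0 := by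
      rintro ⟨i, hi⟩
      obtain ⟨h, hμi⟩ := hi
      exact ⟨h, by simp [hv0def, h], hμi⟩
    rw [orthonormal_iff_ite]
    intro a b
    obtain ⟨ha, hva, hμa⟩ := key a
    obtain ⟨hb, hvb, hμb⟩ := key b
    rw [show s.restrict v0 a = v0 a from rfl, show s.restrict v0 b = v0 b from rfl, hva, hvb]
    rw [hyinner]
    by_cases hab : a = b
    · subst hab
      have h0 : 0 < μ (π ⟨(a.1 : ℕ), ha⟩) := lt_of_le_of_ne (hμ0 _) (Ne.symm hμa)
      rw [if_pos rfl, if_pos rfl, ← Real.sqrt_mul_self h0.le]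
      field_simp
      simp [Real.sq_sqrt, Real.sqrt_nonneg]
    · have hne : π ⟨(a.1 : ℕ), ha⟩ ≠ π ⟨(b.1 : ℕ), hb⟩ := by
        intro h
        apply hab
        have := π.injective h
        exact Subtype.ext (Fin.val_injective congr(($this : Fin n).1))
      rw [if_neg hne, if_neg hab, mul_zero]
  obtain ⟨b, hb⟩ := hv0orth.exists_orthonormalBasis_extension_of_card_eq
    (by simp [finrank_euclideanSpace])
  -- assemble the matrices
  set U : Matrix (Fin m) (Fin m) ℝ :=
    Matrix.of fun x i => (WithLp.equiv 2 (Fin m → ℝ)) (b i) x with hUdef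
  set V : Matrix (Fin n) (Fin n) ℝ :=
    Matrix.of fun x j => (WithLp.equiv 2 (Fin n → ℝ)) (w (π j)) x with hVdef
  set Sig : Matrix (Fin m) (Fin n) ℝ :=
    Matrix.of fun i j => if (i : ℕ) = (j : ℕ) then Real.sqrt (μ (π j)) else 0 with hSdef
  have hU : Uᵀ * U = 1 := by
    ext i i'
    have := orthonormal_iff_ite.mp b.orthonormal i i'
    rw [inner_euc] at this
    simp only [Matrix.mul_apply, transpose_apply, hUdef, Matrix.of_apply, Matrix.one_apply]
    simpa [dotProduct] using this
  have hV : Vᵀ * V = 1 := by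
    ext j j'
    have := orthonormal_iff_ite.mp w.orthonormal (π j) (π j')
    rw [inner_euc] at this
    simp only [Matrix.mul_apply, transpose_apply, hVdef, Matrix.of_apply, Matrix.one_apply,
      EmbeddingLike.apply_eq_iff_eq] at this ⊢
    simpa [dotProduct] using this
  have hVV : V * Vᵀ = 1 := mul_eq_one_comm.mp hV
  refine ⟨U, V, Sig, hU, hV, ?_, ?_, ?_⟩
  · intro i j hij; simp [hSdef, hij]
  · intro i j hij; simp [hSdef, hij, Real.sqrt_nonneg]
  · -- B = U * Sig * Vᵀ
    have hBV : B * V = U * Sig := by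
      ext x j
      have hlhs : (B * V) x j = (B *ᵥ ⇑(w (π j))) x := by
        simp [Matrix.mul_apply, hVdef, mulVec, dotProduct]
      rw [hlhs]
      by_cases hμj : μ (π j) = 0
      · -- both sides vanish
        have hBw : B *ᵥ ⇑(w (π j)) = 0 := by
          rw [← dotProduct_self_eq_zero]
          rw [hkey, if_pos rfl, hμj]
        rw [hBw]
        have hz : ∀ i : Fin m, Sig i j = 0 := by
          intro i
          simp [hSdef, hμj]
        simp [Matrix.mul_apply, hz]
      · have hjr : (j : ℕ) < r := by
          by_contra hjr
          exact hμj (hπ2 j hjr)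
        have hjm : (j : ℕ) < m := lt_of_lt_of_le hjr hrm
        set i0 : Fin m := ⟨(j : ℕ), hjm⟩ with hi0
        have hi0n : ((i0 : Fin m) : ℕ) < n := j.2
        have hfix : (⟨(i0 : ℕ), hi0n⟩ : Fin n) = j := by ext; rfl
        have hi0s : i0 ∈ s := ⟨hi0n, by rw [hfix]; exact hμj⟩
        have hbi0 : b i0 = y (π j) := by
          rw [hb i0 hi0s, hv0def]
          simp only [dif_pos hi0n, hfix]
        have hrhs : (U * Sig) x j = (b i0) x * Real.sqrt (μ (π j)) := by
          rw [Matrix.mul_apply]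
          rw [Finset.sum_eq_single i0]
          · simp [hUdef, hSdef, hi0]
          · intro i _ hii0
            have : (i : ℕ) ≠ (j : ℕ) := by
              intro h; exact hii0 (Fin.ext h)
            simp [hSdef, this]
          · intro h; exact absurd (Finset.mem_univ i0) h
        rw [hrhs, hbi0, hydef]
        have h0 : 0 < μ (π j) := lt_of_le_of_ne (hμ0 _) (Ne.symm hμj)
        have hs0 : Real.sqrt (μ (π j)) ≠ 0 := by positivity
        simp only [PiLp.smul_apply, WithLp.equiv_symm_apply, WithLp.ofLp_toLp, smul_eq_mul]
        field_simp
    calc B = B * (V * Vᵀ) := by rw [hVV, Matrix.mul_one]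
    _ = (B * V) * Vᵀ := by rw [Matrix.mul_assoc]
    _ = U * Sig * Vᵀ := by rw [hBV]


/-- Existence of the elliptic singular value decomposition: for any real `m × n` matrix `A`
and symmetric positive definite `M` (`m × m`) and `N` (`n × n`), there exist `Ũ` with
`Ũᵀ M Ũ = I_m`, `Ṽ` with `Ṽᵀ N Ṽ = I_n`, and a "diagonal" `m × n` matrix `Σ` with
nonnegative diagonal entries such that `A = M Ũ Σ Ṽᵀ N`. -/
theorem esvd_exists (m n : ℕ)
    (M : Matrix (Fin m) (Fin m) ℝ) (N : Matrix (Fin n) (Fin n) ℝ)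
    (A : Matrix (Fin m) (Fin n) ℝ)
    (hM : M.PosDef) (hN : N.PosDef) :
    ∃ (Ut : Matrix (Fin m) (Fin m) ℝ) (Vt : Matrix (Fin n) (Fin n) ℝ)
      (Sig : Matrix (Fin m) (Fin n) ℝ),
      Utᵀ * M * Ut = 1 ∧ Vtᵀ * N * Vt = 1 ∧
      (∀ (i : Fin m) (j : Fin n), (i : ℕ) ≠ (j : ℕ) → Sig i j = 0) ∧
      (∀ (i : Fin m) (j : Fin n), (i : ℕ) = (j : ℕ) → 0 ≤ Sig i j) ∧
      A = M * Ut * Sig * Vtᵀ * N := by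
  classical
  set SM : Matrix (Fin m) (Fin m) ℝ := (open scoped MatrixOrder in CFC.sqrt M) with hSMdef
  set SN : Matrix (Fin n) (Fin n) ℝ := (open scoped MatrixOrder in CFC.sqrt N) with hSNdef
  have hSM2 : SM * SM = M := by
    open scoped MatrixOrder in exact CFC.sqrt_mul_sqrt_self M hM.posSemidef.nonneg
  have hSN2 : SN * SN = N := by
    open scoped MatrixOrder in exact CFC.sqrt_mul_sqrt_self N hN.posSemidef.nonneg
  have hSMt : SMᵀ = SM := by
    rw [← conjTranspose_eq_transpose_of_trivial]
    open scoped MatrixOrder in exact (CFC.sqrt_nonneg M).posSemidef.1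
  have hSNt : SNᵀ = SN := by
    rw [← conjTranspose_eq_transpose_of_trivial]
    open scoped MatrixOrder in exact (CFC.sqrt_nonneg N).posSemidef.1
  have hdM : IsUnit SM.det := by
    have : SM.det * SM.det = M.det := by rw [← det_mul, hSM2]
    have hMd : (0:ℝ) < M.det := hM.det_pos
    refine isUnit_iff_ne_zero.mpr fun h => ?_
    rw [h, mul_zero] at this
    exact absurd this.symm (ne_of_gt hMd)
  have hdN : IsUnit SN.det := by
    have : SN.det * SN.det = N.det := by rw [← det_mul, hSN2]
    have hNd : (0:ℝ) < N.det := hN.det_pos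
    refine isUnit_iff_ne_zero.mpr fun h => ?_
    rw [h, mul_zero] at this
    exact absurd this.symm (ne_of_gt hNd)
  have hM1 : SM⁻¹ * SM = 1 := nonsing_inv_mul _ hdM
  have hM2 : SM * SM⁻¹ = 1 := mul_nonsing_inv _ hdM
  have hN1 : SN⁻¹ * SN = 1 := nonsing_inv_mul _ hdN
  have hN2 : SN * SN⁻¹ = 1 := mul_nonsing_inv _ hdN
  obtain ⟨U, V, Sig, hU, hV, hz, hnn, hB⟩ := svd_exists (SM⁻¹ * A * SN⁻¹)
  refine ⟨SM⁻¹ * U, SN⁻¹ * V, Sig, ?_, ?_, hz, hnn, ?_⟩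
  · rw [transpose_mul, transpose_nonsing_inv, hSMt, ← hSM2]
    calc Uᵀ * SM⁻¹ * (SM * SM) * (SM⁻¹ * U)
        = Uᵀ * ((SM⁻¹ * SM) * (SM * SM⁻¹) * U) := by
          simp only [Matrix.mul_assoc]
      _ = Uᵀ * U := by rw [hM1, hM2, Matrix.one_mul, Matrix.one_mul]
      _ = 1 := hU
  · rw [transpose_mul, transpose_nonsing_inv, hSNt, ← hSN2]
    calc Vᵀ * SN⁻¹ * (SN * SN) * (SN⁻¹ * V)
        = Vᵀ * ((SN⁻¹ * SN) * (SN * SN⁻¹) * V) := by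
          simp only [Matrix.mul_assoc]
      _ = Vᵀ * V := by rw [hN1, hN2, Matrix.one_mul, Matrix.one_mul]
      _ = 1 := hV
  · have hMU : M * (SM⁻¹ * U) = SM * U := by
      rw [← hSM2, Matrix.mul_assoc, ← Matrix.mul_assoc SM SM⁻¹ U, hM2, Matrix.one_mul]
    have hVN : (SN⁻¹ * V)ᵀ * N = Vᵀ * SN := by
      rw [transpose_mul, transpose_nonsing_inv, hSNt, ← hSN2, Matrix.mul_assoc,
        ← Matrix.mul_assoc SN⁻¹ SN SN, hN1, Matrix.one_mul]
    calc A = (SM * SM⁻¹) * A * (SN⁻¹ * SN) := by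
          rw [hM2, hN1, Matrix.one_mul, Matrix.mul_one]
      _ = SM * (SM⁻¹ * A * SN⁻¹) * SN := by simp only [Matrix.mul_assoc]
      _ = SM * (U * Sig * Vᵀ) * SN := by rw [hB]
      _ = (SM * U) * Sig * (Vᵀ * SN) := by simp only [Matrix.mul_assoc]
      _ = M * (SM⁻¹ * U) * Sig * ((SN⁻¹ * V)ᵀ * N) := by rw [hMU, hVN]
      _ = M * (SM⁻¹ * U) * Sig * (SN⁻¹ * V)ᵀ * N := by simp only [Matrix.mul_assoc]
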